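/- If f : ℝ≥0 → ℝ is Lipschitz with constant 1 and f(0) = 0, then for all x, y ≥ 0 and all complex c with |c| = 1, |f(x) - c·f(y)| ≤ |x - c·y| (both sides computed in ℂ). -/

import Mathlib

theorem stmt_0 (f : ℝ → ℝ) (h0 : f 0 = 0)
    (hf : ∀ x y : ℝ, 0 ≤ x → 0 ≤ y → |f x - f y| ≤ |x - y|) :
    ∀ x y : ℝ, 0 ≤ x → 0 ≤ y → ∀ c : ℂ, ‖c‖ = 1 →
      ‖(f x : ℂ) - c * (f y : ℂ)‖ ≤ ‖(x : ℂ) - c * (y : ℂ)‖ := by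
  intro x y hx hy c hc
  have hfx : |f x| ≤ x := by
    have := hf x 0 hx le_rfl
    simpa [h0, abs_of_nonneg hx] using this
  have hfy : |f y| ≤ y := by
    have := hf y 0 hy le_rfl
    simpa [h0, abs_of_nonneg hy] using this
  have hdiff : |f x - f y| ≤ |x - y| := hf x y hx hy
  have hsum : |f x + f y| ≤ x + y := by
    calc |f x + f y| ≤ |f x| + |f y| := abs_add_le _ _
      _ ≤ x + y := add_le_add hfx hfy
  have hc2 : c.re ^ 2 + c.im ^ 2 = 1 := by
    have := Complex.sq_norm c
    rw [Complex.normSq_apply] at this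
    nlinarith [this]
  have hre : |c.re| ≤ 1 := by nlinarith [sq_nonneg c.im, abs_nonneg c.re, sq_abs c.re]
  have key : Complex.normSq ((f x : ℂ) - c * (f y : ℂ)) ≤
      Complex.normSq ((x : ℂ) - c * (y : ℂ)) := by
    simp only [Complex.normSq_apply, Complex.sub_re, Complex.sub_im, Complex.mul_re,
      Complex.mul_im, Complex.ofReal_re, Complex.ofReal_im]
    ring_nf
    nlinarith [sq_abs (f x - f y), sq_abs (x - y), sq_abs (f x + f y),
      mul_self_le_mul_self (abs_nonneg (f x - f y)) hdiff,
      mul_self_le_mul_self (abs_nonneg (f x + f y)) hsum,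
      abs_le.mp hre, sq_nonneg (x - y), sq_nonneg (x + y), hc2]
  calc ‖(f x : ℂ) - c * (f y : ℂ)‖ = Real.sqrt (Complex.normSq ((f x : ℂ) - c * (f y : ℂ))) := by
        rw [Complex.norm_def]
    _ ≤ Real.sqrt (Complex.normSq ((x : ℂ) - c * (y : ℂ))) := Real.sqrt_le_sqrt key
    _ = ‖(x : ℂ) - c * (y : ℂ)‖ := by rw [Complex.norm_def]
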